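/- arXiv:2301.04789 — 2 statements merged into one kernel-verified Lean document; each statement's English description precedes it below -/
import Mathlib

section
/- Chaitin's incompleteness theorem (abstract form): Let T be a function from binary strings to Prop representing provability of 'x is random', such that the set {x : T x} is computably enumerable and sound, i.e., T x implies C(x) ≥ |x|/2, where C is plain Kolmogorov complexity relative to a fixed universal machine. Then there exists a constant k such that for all x with |x| > k, ¬ T x. -/
open Nat.Partrec (Code)
open Nat.Partrec.Code

/-- Length of the list encoded by `k`, or `0` if `k` encodes nothing. -/
def chLen (k : ℕ) : ℕ :=
  ((Encodable.decode (α := List Bool) k).map List.length).getD 0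

/-- Stage-`t` search: interpret `t` as a pair `(k, s)`; succeed with value `k` if the
code `c` halts on `k` within `s` steps and `k` encodes a string of length `≥ m`. -/
def chSearch (c : Code) (m t : ℕ) : Option ℕ :=
  bif (evaln t.unpair.2 c t.unpair.1).isSome && decide (m ≤ chLen t.unpair.1)
  then some t.unpair.1 else none

/-- The diagonal machine: on input `p`, search for (an encoding of) a string `x` with
`|x| ≥ 4 |p|` on which the verifier `c` halts, and output it. -/
def chG (c : Code) (p : List Bool) : Part (List Bool) :=
  (Nat.rfindOpt fun t => chSearch c (4 * p.length) t).bind fun k =>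
    Part.ofOption (Encodable.decode k)

theorem chLen_primrec : Primrec chLen :=
  Primrec.option_getD.comp
    ((Primrec.option_map₁ Primrec.list_length).comp Primrec.decode) (Primrec.const 0)

theorem chSearch_computable (c : Code) :
    Computable₂ fun (p : List Bool) (t : ℕ) => chSearch c (4 * p.length) t := by
  have hk : Primrec fun a : List Bool × ℕ => a.2.unpair.1 :=
    Primrec.fst.comp (Primrec.unpair.comp Primrec.snd)
  have hs : Primrec fun a : List Bool × ℕ => a.2.unpair.2 :=
    Primrec.snd.comp (Primrec.unpair.comp Primrec.snd)
  have hm : Primrec fun a : List Bool × ℕ => 4 * a.1.length :=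
    Primrec.nat_mul.comp (Primrec.const 4) (Primrec.list_length.comp Primrec.fst)
  have hev : Primrec fun a : List Bool × ℕ =>
      (evaln a.2.unpair.2 c a.2.unpair.1).isSome :=
    Primrec.option_isSome.comp (primrec_evaln.comp ((hs.pair (Primrec.const c)).pair hk))
  have hle : Primrec fun a : List Bool × ℕ => decide (4 * a.1.length ≤ chLen a.2.unpair.1) :=
    (Primrec.nat_le.comp hm (chLen_primrec.comp hk)).decide
  have hcond : Primrec fun a : List Bool × ℕ =>
      ((evaln a.2.unpair.2 c a.2.unpair.1).isSome
        && decide (4 * a.1.length ≤ chLen a.2.unpair.1)) :=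
    (Primrec.cond hev hle (Primrec.const false)).of_eq (fun a => by cases (evaln a.2.unpair.2 c a.2.unpair.1).isSome <;> simp)
  exact Primrec₂.to_comp
    (Primrec.cond hcond (Primrec.option_some.comp hk) (Primrec.const none) : Primrec _)

theorem chG_partrec (c : Code) : Partrec (chG c) :=
  (Partrec.rfindOpt (chSearch_computable c)).bind
    ((Computable.ofOption (Computable.decode.comp Computable.snd)).to₂)

/-- Chaitin's incompleteness theorem (abstract form): if `U` is a universal partial
computable machine, and `T` is a c.e. predicate ("`x` is provably random") that is
sound, i.e. `T x` implies `C(x) ≥ |x|/2` (no program of length `≤ |x|/2` outputs `x`),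
then there is a constant `k` such that `¬ T x` for all `x` with `|x| > k`. -/
theorem stmt_3 (U : List Bool →. List Bool) (hU : Partrec U)
    (hUniv : ∀ f : List Bool →. List Bool, Partrec f →
      ∃ d : ℕ, ∀ p x : List Bool, f p = Part.some x →
        ∃ q : List Bool, q.length ≤ p.length + d ∧ U q = Part.some x)
    (T : List Bool → Prop)
    (hce : ∃ f : List Bool →. Unit, Partrec f ∧ ∀ x, T x ↔ (f x).Dom)
    (hsound : ∀ x, T x → ∀ p : List Bool, 2 * p.length ≤ x.length → U p ≠ Part.some x) :
    ∃ k : ℕ, ∀ x : List Bool, x.length > k → ¬ T x := by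
  obtain ⟨f, hf, hT⟩ := hce
  obtain ⟨c, hc⟩ := exists_code.1 hf
  obtain ⟨d, hd⟩ := hUniv (chG c) (chG_partrec c)
  by_contra hcon
  push_neg at hcon
  obtain ⟨x, hxlen, hTx⟩ := hcon (4 * d)
  set p : List Bool := List.replicate d true with hp
  have hplen : p.length = d := List.length_replicate
  -- x witnesses that the search in `chG c p` succeeds
  have hxdom : (f x).Dom := (hT x).1 hTx
  have hxeval : ((f x).map Encodable.encode).Dom := hxdom
  have hxc : (eval c (Encodable.encode x)).Dom := by
    rw [hc]
    simp [Encodable.encodek]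
    exact hxdom
  obtain ⟨v, hv⟩ := Part.dom_iff_mem.1 hxc
  obtain ⟨s, hvs⟩ := evaln_complete.1 hv
  have hchlen : chLen (Encodable.encode x) = x.length := by
    simp [chLen, Encodable.encodek]
  have hsearch : Encodable.encode x ∈ chSearch c (4 * p.length)
      (Nat.pair (Encodable.encode x) s) := by
    unfold chSearch
    rw [Nat.unpair_pair]
    simp only [hplen, hchlen]
    have h1 : (evaln s c (Encodable.encode x)).isSome = true :=
      Option.isSome_iff_exists.2 ⟨v, hvs⟩
    have h2 : (4 * d ≤ x.length) := le_of_lt hxlen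
    simp [h1, h2]
  have hdom : (Nat.rfindOpt fun t => chSearch c (4 * p.length) t).Dom :=
    Nat.rfindOpt_dom.2 ⟨_, _, hsearch⟩
  set a := (Nat.rfindOpt fun t => chSearch c (4 * p.length) t).get hdom with hadef
  have ha : a ∈ Nat.rfindOpt fun t => chSearch c (4 * p.length) t := Part.get_mem hdom
  obtain ⟨t, hat⟩ := Nat.rfindOpt_spec ha
  -- unpack what the search found
  have hcond : ((evaln t.unpair.2 c t.unpair.1).isSome
      && decide (4 * p.length ≤ chLen t.unpair.1)) = true ∧ a = t.unpair.1 := by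
    by_cases h : ((evaln t.unpair.2 c t.unpair.1).isSome
        && decide (4 * p.length ≤ chLen t.unpair.1)) = true
    · refine ⟨h, ?_⟩
      have := hat
      unfold chSearch at this
      rw [h] at this
      simpa using this.symm
    · exfalso
      have := hat
      unfold chSearch at this
      rw [Bool.not_eq_true] at h
      rw [h] at this
      simp at this
  obtain ⟨hcondb, haeq⟩ := hcond
  rw [Bool.and_eq_true, decide_eq_true_eq] at hcondb
  obtain ⟨hev, hlen⟩ := hcondb
  obtain ⟨w, hw⟩ := Option.isSome_iff_exists.1 hev
  have hweval : w ∈ eval c t.unpair.1 := evaln_sound hw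
  rw [hc] at hweval
  obtain ⟨y, hy, hwy⟩ := Part.mem_bind_iff.1 hweval
  have hy' : Encodable.decode (α := List Bool) t.unpair.1 = some y := Part.mem_coe.1 hy
  have hTy : T y := by
    obtain ⟨u, hu, -⟩ := Part.mem_map_iff _ |>.1 hwy
    exact (hT y).2 (Part.dom_iff_mem.2 ⟨u, hu⟩)
  have hylen : 4 * d ≤ y.length := by
    have : chLen t.unpair.1 = y.length := by simp [chLen, hy']
    rw [hplen] at hlen
    omega
  -- chG c p = some y
  have hgy : chG c p = Part.some y := by
    apply Part.eq_some_iff.2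
    refine Part.mem_bind_iff.2 ⟨a, ha, ?_⟩
    rw [haeq]
    simp [hy']
  obtain ⟨q, hqlen, hUq⟩ := hd p y hgy
  rw [hplen] at hqlen
  exact hsound y hTy q (by omega) hUq
end

section
/- If a computably enumerable set W is a subset of the set R of Kolmogorov random strings (strings incompressible by half), then W is finite. That is, R is immune. -/
open Nat.Partrec (Code)
open Nat.Partrec.Code

/-- Immunity of `R` (key half): if `U` is a universal partial computable machine and
`W` is a c.e. set of strings contained in `R = {x : C(x) ≥ |x|/2}`, then `W` is finite. -/
theorem stmt_4 (U : List Bool →. List Bool) (hU : Partrec U)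
    (hUniv : ∀ f : List Bool →. List Bool, Partrec f →
      ∃ d : ℕ, ∀ p x : List Bool, f p = Part.some x →
        ∃ q : List Bool, q.length ≤ p.length + d ∧ U q = Part.some x)
    (W : Set (List Bool))
    (hce : ∃ f : List Bool →. Unit, Partrec f ∧ ∀ x, x ∈ W ↔ (f x).Dom)
    (hsub : W ⊆ {x : List Bool |
      ∀ p : List Bool, 2 * p.length ≤ x.length → U p ≠ Part.some x}) :
    W.Finite := by
  classical
  obtain ⟨f, hf, hfW⟩ := hce
  obtain ⟨c, hc⟩ := exists_code.1 hf
  -- membership in W is equivalent to evaln halting at some stage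
  have hmemW : ∀ x : List Bool, x ∈ W ↔ ∃ k, (evaln k c (Encodable.encode x)).isSome := by
    intro x
    rw [hfW]
    constructor
    · intro hdom
      have hx : ((f x).map Encodable.encode).Dom := hdom
      obtain ⟨y, hy⟩ := Part.dom_iff_mem.1 hx
      have : y ∈ eval c (Encodable.encode x) := by
        rw [hc]; simp only [Encodable.encodek, Part.coe_some, Part.bind_some]
        exact hy
      obtain ⟨k, hk⟩ := evaln_complete.1 this
      exact ⟨k, by simp [Option.isSome_iff_exists]; exact ⟨y, hk⟩⟩
    · rintro ⟨k, hk⟩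
      obtain ⟨y, hy⟩ := Option.isSome_iff_exists.1 hk
      have := evaln_sound (c := c) (n := Encodable.encode x) (x := y) (k := k) hy
      rw [hc] at this
      simp [Encodable.encodek] at this
      obtain ⟨u, hu, -⟩ := this
      exact Part.dom_iff_mem.2 ⟨u, hu⟩
  -- the search function
  set h : List Bool → ℕ → Option (List Bool) := fun p n =>
    (Encodable.decode (α := List Bool) n.unpair.1).bind fun x =>
      if 4 * p.length ≤ x.length ∧ (evaln n.unpair.2 c (Encodable.encode x)).isSome
      then some x else none with hhdef
  have hh : Computable₂ h := by
    apply Primrec₂.to_comp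
    apply Primrec.option_bind
      (Primrec.decode.comp (Primrec.fst.comp (Primrec.unpair.comp Primrec.snd)))
    apply Primrec.ite ?_ (Primrec.option_some.comp Primrec.snd) (Primrec.const none)
    apply PrimrecPred.and
    · exact Primrec.nat_le.comp
        (Primrec.nat_mul.comp (Primrec.const 4)
          (Primrec.list_length.comp (Primrec.fst.comp Primrec.fst)))
        (Primrec.list_length.comp Primrec.snd)
    · have hb : Primrec fun a : (List Bool × ℕ) × List Bool =>
          (evaln (Nat.unpair a.1.2).2 c (Encodable.encode a.2)).isSome :=
        Primrec.option_isSome.comp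
          (primrec_evaln.comp
            (((Primrec.snd.comp (Primrec.unpair.comp (Primrec.snd.comp Primrec.fst))).pair
              (Primrec.const c)).pair (Primrec.encode.comp Primrec.snd)))
      exact Primrec.primrecPred (hb.of_eq fun a => by simp)
  have hg : Partrec fun p => Nat.rfindOpt (h p) := Partrec.rfindOpt hh
  obtain ⟨d, hd⟩ := hUniv _ hg
  by_contra hWfin
  have hWinf : W.Infinite := hWfin
  obtain ⟨x, hxW, hxlen⟩ := hWinf.exists_notMem_finite (List.finite_length_lt Bool (4 * d))
  simp only [Set.mem_setOf_eq, not_lt] at hxlen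
  set p : List Bool := List.replicate d false with hp
  have hplen : p.length = d := List.length_replicate
  -- the search halts on p
  obtain ⟨k, hk⟩ := (hmemW x).1 hxW
  have hdom : (Nat.rfindOpt (h p)).Dom := by
    apply Nat.rfindOpt_dom.2
    refine ⟨Nat.pair (Encodable.encode x) k, x, ?_⟩
    simp only [hhdef, Nat.unpair_pair, Encodable.encodek, Option.bind_some]
    rw [if_pos ⟨by rw [hplen]; exact hxlen, hk⟩]
    rfl
  set x' := (Nat.rfindOpt (h p)).get hdom with hx'
  have hx'mem : x' ∈ Nat.rfindOpt (h p) := Part.get_mem hdom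
  obtain ⟨m, hm⟩ := Nat.rfindOpt_spec hx'mem
  -- extract properties of x'
  have hx'props : 4 * d ≤ x'.length ∧ x' ∈ W := by
    simp only [hhdef, Option.mem_def, Option.bind_eq_some_iff] at hm
    obtain ⟨y, hy, hy2⟩ := hm
    split_ifs at hy2 with hcond
    cases hy2
    obtain ⟨h1, h2⟩ := hcond
    rw [hplen] at h1
    exact ⟨h1, (hmemW _).2 ⟨_, h2⟩⟩
  obtain ⟨q, hqlen, hqU⟩ := hd p x' (Part.eq_some_iff.2 hx'mem)
  refine hsub hx'props.2 q ?_ hqU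
  have : q.length ≤ 2 * d := by simpa [hplen, two_mul] using hqlen
  calc 2 * q.length ≤ 2 * (2 * d) := by omega
    _ = 4 * d := by ring
    _ ≤ x'.length := hx'props.1
end
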